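/- arXiv:2311.00554 — 2 statements merged into one kernel-verified Lean document; each statement's English description precedes it below -/
import Mathlib

section
/- For x > 0 define g(x) = (1 − σ(−x))/x where σ(t) = t/(1 − e^{-t}); equivalently g(x) = (1 − x/(e^{x} − 1))/x. Then there is an absolute constant C such that |g'(x)| ≤ C·min{1, 1/x} for all x > 0. -/
/-- `g(x) = (1 − σ(−x))/x = (1 − x/(eˣ − 1))/x` for `x > 0`. -/
noncomputable def gWeight (x : ℝ) : ℝ := (1 - x / (Real.exp x - 1)) / x

lemma one_lt_exp' {x : ℝ} (hx : 0 < x) : 1 < Real.exp x := by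
  nlinarith [Real.add_one_le_exp x]

lemma key_ineq {x : ℝ} (hx : 0 < x) : x ^ 2 * Real.exp x < (Real.exp x - 1) ^ 2 := by
  have ha : 0 < Real.exp (x / 2) := Real.exp_pos _
  have h1 : x / 2 < Real.sinh (x / 2) := Real.self_lt_sinh_iff.mpr (by linarith)
  rw [Real.sinh_eq] at h1
  have hn : Real.exp (-(x / 2)) = (Real.exp (x / 2))⁻¹ := Real.exp_neg _
  have he : Real.exp (x / 2) * Real.exp (x / 2) = Real.exp x := by
    rw [← Real.exp_add]; ring_nf
  rw [hn] at h1
  -- x < a - a⁻¹  with a = exp (x/2)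
  have h2 : x * Real.exp (x / 2) < Real.exp x - 1 := by
    have := (mul_lt_mul_of_pos_right (by linarith : x < Real.exp (x/2) - (Real.exp (x/2))⁻¹) ha)
    calc x * Real.exp (x / 2) < (Real.exp (x/2) - (Real.exp (x/2))⁻¹) * Real.exp (x/2) := this
      _ = Real.exp x - 1 := by field_simp [he]; rw [sq, he]
  have hpos : 0 < x * Real.exp (x / 2) := by positivity
  nlinarith [h2, hpos, he]

lemma taylor_bound {x : ℝ} (hx0 : 0 ≤ x) (hx1 : x ≤ 1) :
    Real.exp x + Real.exp (-x) ≤ 2 + x ^ 2 + x ^ 4 := by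
  have h1 := Real.exp_bound (x := x) (by rw [abs_of_nonneg hx0]; exact hx1) (n := 5) (by norm_num)
  have h2 := Real.exp_bound (x := -x) (by rw [abs_neg, abs_of_nonneg hx0]; exact hx1) (n := 5)
    (by norm_num)
  rw [abs_of_nonneg hx0] at h1
  rw [abs_neg, abs_of_nonneg hx0] at h2
  simp [Finset.sum_range_succ, Nat.factorial] at h1 h2
  have hx5 : x ^ 5 ≤ x ^ 4 := pow_le_pow_of_le_one hx0 hx1 (by norm_num)
  rw [abs_le] at h1 h2
  norm_num at h1 h2
  nlinarith [h1.1, h1.2, h2.1, h2.2, hx5]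

lemma num_bound {x : ℝ} (hx : 0 < x) (hx1 : x ≤ 1) :
    (Real.exp x - 1) ^ 2 - x ^ 2 * Real.exp x ≤ 3 * x ^ 4 := by
  have ht := taylor_bound hx.le hx1
  have hmul : Real.exp x * Real.exp (-x) = 1 := by
    rw [← Real.exp_add]; simp
  have he3 : Real.exp x ≤ 3 := by
    calc Real.exp x ≤ Real.exp 1 := Real.exp_le_exp.mpr hx1
      _ ≤ 3 := by nlinarith [Real.exp_one_lt_d9]
  have hfac : 0 ≤ Real.exp x + Real.exp (-x) - 2 - x ^ 2 := by
    nlinarith [key_ineq hx, Real.exp_pos x, hmul]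
  have hx4 : 0 ≤ x ^ 4 := by positivity
  have hfactor : Real.exp x + Real.exp (-x) - 2 - x ^ 2 ≤ x ^ 4 := by linarith
  nlinarith [Real.exp_pos x, hmul,
    mul_le_mul_of_nonneg_left hfactor (Real.exp_pos x).le,
    mul_le_mul_of_nonneg_right he3 hx4]

lemma deriv_gWeight {x : ℝ} (hx : 0 < x) :
    deriv gWeight x = Real.exp x / (Real.exp x - 1) ^ 2 - 1 / x ^ 2 := by
  have h1 : Real.exp x - 1 ≠ 0 := by nlinarith [one_lt_exp' hx]
  have heq : gWeight =ᶠ[nhds x] fun y => y⁻¹ - (Real.exp y - 1)⁻¹ := by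
    filter_upwards [isOpen_Ioi.mem_nhds hx] with y hy
    have hy0 : (y : ℝ) ≠ 0 := ne_of_gt hy
    have hy1 : Real.exp y - 1 ≠ 0 := by nlinarith [one_lt_exp' hy]
    unfold gWeight
    rw [inv_sub_inv hy0 hy1, div_eq_div_iff hy0 (mul_ne_zero hy0 hy1)]
    field_simp
  rw [heq.deriv_eq]
  have hd : HasDerivAt (fun y : ℝ => y⁻¹ - (Real.exp y - 1)⁻¹)
      (-(x ^ 2)⁻¹ - -(Real.exp x) / (Real.exp x - 1) ^ 2) x :=
    (hasDerivAt_inv hx.ne').sub (((Real.hasDerivAt_exp x).sub_const 1).inv h1)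
  rw [hd.deriv]
  ring

theorem stmt4 :
    ∃ C : ℝ, 0 < C ∧ ∀ x : ℝ, 0 < x → |deriv gWeight x| ≤ C * min 1 (1 / x) := by
  refine ⟨3, by norm_num, fun x hx => ?_⟩
  have h1 : (1 : ℝ) < Real.exp x := one_lt_exp' hx
  have hden : (0 : ℝ) < Real.exp x - 1 := by linarith
  have hkey := key_ineq hx
  have hnp : Real.exp x / (Real.exp x - 1) ^ 2 ≤ 1 / x ^ 2 := by
    rw [div_le_div_iff₀ (by positivity) (by positivity)]
    nlinarith [hkey]
  rw [deriv_gWeight hx, abs_of_nonpos (by linarith), neg_sub]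
  have hxe : x ≤ Real.exp x - 1 := by nlinarith [Real.add_one_le_exp x]
  rcases le_or_gt x 1 with hx1 | hx1
  · have hmin : min 1 (1 / x) = 1 := min_eq_left (by
      rw [le_div_iff₀ hx]; linarith)
    rw [hmin, mul_one]
    have e1 : 1 / x ^ 2 - Real.exp x / (Real.exp x - 1) ^ 2
        = ((Real.exp x - 1) ^ 2 - x ^ 2 * Real.exp x) / (x ^ 2 * (Real.exp x - 1) ^ 2) := by
      field_simp
    rw [e1, div_le_iff₀ (by positivity)]
    have hnb := num_bound hx hx1
    nlinarith [hnb, sq_nonneg x, mul_le_mul_of_nonneg_left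
      (mul_self_le_mul_self hx.le hxe) (by norm_num : (0:ℝ) ≤ 3)]
  · have hmin : min 1 (1 / x) = 1 / x := min_eq_right (by
      rw [div_le_one hx]; linarith)
    rw [hmin]
    have h2 : 1 / x ^ 2 ≤ 3 * (1 / x) := by
      rw [div_le_iff₀ (by positivity)]
      have : 3 * (1 / x) * x ^ 2 = 3 * x := by field_simp
      rw [this]; linarith
    have h3 : 0 ≤ Real.exp x / (Real.exp x - 1) ^ 2 := by positivity
    linarith
end

section
/- For ρ > 0, (σ(ρ) − 1)/ρ − 1/2 = (1/2)coth(ρ/2) − 1/ρ, where σ(t) = t/(1 − e^{−t}); moreover this quantity is nonnegative and bounded: 0 ≤ (1/2)coth(ρ/2) − 1/ρ ≤ min{1/2, ρ/12}. -/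
open Real

lemma lemA : ∀ x : ℝ, 0 ≤ x → Real.sinh x ≤ x * Real.cosh x := by
  have hmono : Monotone (fun x : ℝ => x * Real.cosh x - Real.sinh x) := by
    apply monotone_of_hasDerivAt_nonneg (f' := fun x => x * Real.sinh x)
    · intro x
      have h1 : HasDerivAt (fun x : ℝ => x * Real.cosh x) (Real.cosh x + x * Real.sinh x) x := by
        have := (hasDerivAt_id' x).mul (Real.hasDerivAt_cosh x); rw [one_mul] at this; exact this
      have := h1.sub (Real.hasDerivAt_sinh x)
      exact this.congr_deriv (by ring)
    · intro x
      rcases le_or_gt 0 x with h | h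
      · exact mul_nonneg h (by rw [← Real.sinh_zero]; exact Real.sinh_le_sinh.2 h)
      · have : Real.sinh x ≤ 0 := by
          rw [← Real.sinh_zero]; exact Real.sinh_le_sinh.2 h.le
        show (0:ℝ) ≤ x * Real.sinh x
        nlinarith [mul_nonneg (neg_nonneg.2 h.le) (neg_nonneg.2 this)]
  intro x hx
  have := hmono hx
  simp only [Real.sinh_zero, Real.cosh_zero, mul_zero, zero_mul, sub_zero, zero_sub] at this
  linarith [this]

lemma lemB : ∀ x : ℝ, 0 ≤ x → x * Real.cosh x - Real.sinh x ≤ (x^2/3) * Real.sinh x := by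
  have hmono : Monotone (fun x : ℝ => (x^2/3) * Real.sinh x - x * Real.cosh x + Real.sinh x) := by
    apply monotone_of_hasDerivAt_nonneg
      (f' := fun x => (x/3) * (x * Real.cosh x - Real.sinh x))
    · intro x
      have h1 : HasDerivAt (fun x : ℝ => (x^2/3) * Real.sinh x)
          ((2*x/3) * Real.sinh x + (x^2/3) * Real.cosh x) x := by
        have hp : HasDerivAt (fun x : ℝ => x^2/3) (2*x/3) x := by
          simpa using ((hasDerivAt_pow 2 x).div_const 3)
        exact hp.mul (Real.hasDerivAt_sinh x)
      have h2 : HasDerivAt (fun x : ℝ => x * Real.cosh x) (Real.cosh x + x * Real.sinh x) x := by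
        have := (hasDerivAt_id' x).mul (Real.hasDerivAt_cosh x); rw [one_mul] at this; exact this
      have := (h1.sub h2).add (Real.hasDerivAt_sinh x)
      exact this.congr_deriv (by ring)
    · intro x
      rcases le_or_gt 0 x with h | h
      · have := lemA x h
        have : 0 ≤ x * Real.cosh x - Real.sinh x := by linarith
        positivity
      · have hx' : 0 ≤ -x := by linarith
        have := lemA (-x) hx'
        simp [Real.sinh_neg, Real.cosh_neg] at this
        have h1 : x * Real.cosh x - Real.sinh x ≤ 0 := by linarith
        have h2 : x / 3 ≤ 0 := by linarith
        show (0:ℝ) ≤ x / 3 * (x * Real.cosh x - Real.sinh x)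
        nlinarith [mul_nonneg (neg_nonneg.2 h2) (neg_nonneg.2 h1)]
  intro x hx
  have := hmono hx
  simp only [Real.sinh_zero, Real.cosh_zero] at this
  nlinarith [this]

noncomputable def fitSigma (x : ℝ) : ℝ := if x = 0 then 1 else x / (1 - Real.exp (-x))

theorem stmt14 :
    ∀ ρ : ℝ, 0 < ρ →
      (fitSigma ρ - 1) / ρ - 1 / 2
          = (1 / 2) * (Real.cosh (ρ / 2) / Real.sinh (ρ / 2)) - 1 / ρ
      ∧ 0 ≤ (1 / 2) * (Real.cosh (ρ / 2) / Real.sinh (ρ / 2)) - 1 / ρ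
      ∧ (1 / 2) * (Real.cosh (ρ / 2) / Real.sinh (ρ / 2)) - 1 / ρ
          ≤ min (1 / 2) (ρ / 12) := by
  intro ρ hρ
  have hρ0 : ρ ≠ 0 := hρ.ne'
  have hx : 0 < ρ / 2 := by linarith
  have hs : 0 < Real.sinh (ρ / 2) := by
    rw [← Real.sinh_zero]; exact Real.sinh_lt_sinh.2 hx
  have hc : 0 < Real.cosh (ρ / 2) := Real.cosh_pos _
  set s := Real.sinh (ρ / 2) with hsdef
  set c := Real.cosh (ρ / 2) with hcdef
  set u := Real.exp (ρ / 2) with hudef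
  have hu : 0 < u := Real.exp_pos _
  have hsv : s = (u - u⁻¹) / 2 := by rw [hsdef, hudef, Real.sinh_eq, Real.exp_neg]
  have hcv : c = (u + u⁻¹) / 2 := by rw [hcdef, hudef, Real.cosh_eq, Real.exp_neg]
  have huu : Real.exp ρ = u * u := by
    rw [hudef, ← Real.exp_add]; congr 1; ring
  have hev : Real.exp (-ρ) = (u * u)⁻¹ := by rw [Real.exp_neg, huu]
  have hgt : 1 < u * u := by
    rw [← huu, ← Real.exp_zero]; exact Real.exp_lt_exp.2 hρ
  have hne : u * u - 1 ≠ 0 := by nlinarith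
  have key : (1 / 2) * (c / s) - 1 / ρ = (ρ * c - 2 * s) / (2 * ρ * s) := by
    field_simp
  have hA := lemA (ρ/2) hx.le
  have hB := lemB (ρ/2) hx.le
  refine ⟨?_, ?_, ?_⟩
  · rw [key, hsv, hcv]
    rw [fitSigma, if_neg hρ0, hev]
    have hsne : u - u⁻¹ ≠ 0 := by
      intro h
      have : u * u - 1 = u * (u - u⁻¹) := by field_simp
      rw [h, mul_zero] at this
      exact hne this
    have hne2 : u ^ 2 - 1 ≠ 0 := by nlinarith
    field_simp
    ring
  · rw [key]
    apply div_nonneg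
    · nlinarith
    · positivity
  · apply le_min
    · rw [key, div_le_iff₀ (by positivity)]
      have hsq : 1 + ρ ≤ u * u := by
        rw [← huu]; linarith [Real.add_one_le_exp ρ]
      rw [hsv, hcv]
      have hinv : u * u⁻¹ = 1 := mul_inv_cancel₀ hu.ne'
      nlinarith [inv_pos.2 hu]
    · rw [key, div_le_div_iff₀ (by positivity) (by norm_num : (0:ℝ) < 12)]
      nlinarith [hB, hs.le, mul_pos hρ hρ]
end
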